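/- Let P = P_0 ∗ P_1 ∗ ⋯ ∗ P_k ⊂ ℝⁿ be a B_k-polytope, i.e. the Cayley sum of lattice polytopes P_0, …, P_k ⊂ ℝ^{n−k} with dim(P_1 + ⋯ + P_k) < k (Minkowski sum) and dim P_0 = n − k. Suppose that dim P_i ≥ 1 for all i = 0, 1, …, k and that P_0 is not a join. Then P is not a join. -/

import Mathlib

open scoped Pointwise

noncomputable section

/-- A point of `ℝⁿ` is a lattice point if all its coordinates are integers. -/
def IsLatticePoint {n : ℕ} (x : Fin n → ℝ) : Prop := ∀ i, ∃ z : ℤ, x i = (z : ℝ)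

/-- A lattice polytope: the convex hull of finitely many lattice points. -/
def IsLatticePolytope {n : ℕ} (P : Set (Fin n → ℝ)) : Prop :=
  ∃ V : Finset (Fin n → ℝ), (∀ v ∈ V, IsLatticePoint v) ∧
    P = convexHull ℝ (V : Set (Fin n → ℝ))

/-- The dimension of a subset of `ℝⁿ`: the rank of the direction of its affine span. -/
def polyDim {n : ℕ} (S : Set (Fin n → ℝ)) : ℕ :=
  Module.finrank ℝ (affineSpan ℝ S).direction

/-- A face of a convex set: an extreme convex subset (this includes `∅` and the set itself). -/
def IsFace {n : ℕ} (K F : Set (Fin n → ℝ)) : Prop :=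
  IsExtreme ℝ K F ∧ Convex ℝ F

/-- The `d`-dimensional lattice volume (normalized so that a fundamental domain of the
lattice of the affine span has volume `1`, and multiplied by `d!`), computed via the
Ehrhart-type limit `d! · #(m·S ∩ ℤⁿ)/m^d`.  It is `0` if `dim S < d`. -/
def latticeVol {n : ℕ} (d : ℕ) (S : Set (Fin n → ℝ)) : ℝ :=
  Filter.limUnder Filter.atTop fun m : ℕ =>
    ((d.factorial : ℝ) * ({x ∈ (m : ℝ) • S | IsLatticePoint x}.ncard : ℝ)) / (m : ℝ) ^ d

/-- A polytope `P` contained in a cone `C` is convenient if `dim (P ∩ F) = dim F` for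
every nonempty face `F` of `C`. -/
def IsConvenient {n : ℕ} (C P : Set (Fin n → ℝ)) : Prop :=
  P ⊆ C ∧ ∀ F : Set (Fin n → ℝ), IsFace C F → F.Nonempty → polyDim (P ∩ F) = polyDim F

/-- The Newton number `ν_C(P) = Σ_F (−1)^{n−dim F} Vol_ℤ(P ∩ F)`, the sum running over
all nonempty faces `F` of the `n`-dimensional cone `C`.  (Note `(−1)^{n−dim F} = (−1)^{n+dim F}`.) -/
def newtonNumber {n : ℕ} (C P : Set (Fin n → ℝ)) : ℝ :=
  ∑ᶠ (F : Set (Fin n → ℝ)) (_ : IsFace C F ∧ F.Nonempty),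
    (-1 : ℝ) ^ (n + polyDim F) * latticeVol (polyDim F) (P ∩ F)

/-- The cone `ℝ^m_{≥0} ⊕ ℝ^{n−m} ⊂ ℝⁿ`. -/
def orthant (n m : ℕ) : Set (Fin n → ℝ) := {x | ∀ i : Fin n, (i : ℕ) < m → 0 ≤ x i}


/-- A lattice polytope `P` is a join of two nonempty faces `Q₁, Q₂`:
`⟨Q₁ − Q₁⟩ ∩ ⟨Q₂ − Q₂⟩ = 0`, `Q₁ ∩ Q₂ = ∅` and `conv(Q₁ ∪ Q₂) = P`. -/
def IsJoinPolytope {n : ℕ} (P : Set (Fin n → ℝ)) : Prop :=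
  ∃ Q₁ Q₂ : Set (Fin n → ℝ), IsFace P Q₁ ∧ IsFace P Q₂ ∧ Q₁.Nonempty ∧ Q₂.Nonempty ∧
    Submodule.span ℝ (Q₁ - Q₁) ⊓ Submodule.span ℝ (Q₂ - Q₂) = ⊥ ∧
    Q₁ ∩ Q₂ = ∅ ∧ convexHull ℝ (Q₁ ∪ Q₂) = P

section Aux
variable {E : Type*} [AddCommGroup E] [Module ℝ E]

lemma extreme_slice (K : Set E) (ℓ : E →ₗ[ℝ] ℝ) (c : ℝ) (h : ∀ x ∈ K, ℓ x ≤ c) :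
    IsExtreme ℝ K {x ∈ K | ℓ x = c} := by
  constructor
  · exact Set.sep_subset _ _
  · rintro x₁ hx₁ x₂ hx₂ x ⟨hxK, hxc⟩ ⟨a, b, ha, hb, hab, hx⟩
    have h1 := h x₁ hx₁
    have h2 := h x₂ hx₂
    have : a * ℓ x₁ + b * ℓ x₂ = c := by
      rw [← hxc, ← hx]; simp [mul_comm]
    have hcc : a * c + b * c = c := by rw [← add_mul, hab, one_mul]
    have e1 : ℓ x₁ = c := by
      by_contra hne
      have hlt : ℓ x₁ < c := lt_of_le_of_ne h1 hne
      have : a * ℓ x₁ < a * c := mul_lt_mul_of_pos_left hlt ha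
      have : b * ℓ x₂ ≤ b * c := mul_le_mul_of_nonneg_left h2 hb.le
      linarith
    have e2 : ℓ x₂ = c := by
      by_contra hne
      have hlt : ℓ x₂ < c := lt_of_le_of_ne h2 hne
      have : b * ℓ x₂ < b * c := mul_lt_mul_of_pos_left hlt hb
      have : a * ℓ x₁ ≤ a * c := mul_le_mul_of_nonneg_left h1 ha.le
      linarith
    exact ⟨hx₁, e1⟩

lemma hull_slice (S : Set E) (ℓ : E →ₗ[ℝ] ℝ) (c : ℝ) (h : ∀ x ∈ S, ℓ x ≤ c) :
    {x ∈ convexHull ℝ S | ℓ x = c} = convexHull ℝ {x ∈ S | ℓ x = c} := by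
  apply Set.Subset.antisymm
  · rintro x ⟨hxS, hxc⟩
    rw [convexHull_eq] at hxS
    obtain ⟨ι, t, w, z, hw, hw1, hz, hx⟩ := hxS
    classical
    have hsum : ∑ i ∈ t, w i • z i = x := by
      rw [← hx, Finset.centerMass_eq_of_sum_1 _ _ hw1]
    have hle : ∀ i ∈ t, w i * ℓ (z i) ≤ w i * c := fun i hi =>
      mul_le_mul_of_nonneg_left (h _ (hz i hi)) (hw i hi)
    have hsum2 : ∑ i ∈ t, w i * ℓ (z i) = ∑ i ∈ t, w i * c := by
      have : ℓ x = ∑ i ∈ t, w i * ℓ (z i) := by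
        rw [← hsum, map_sum]; simp
      rw [← this, hxc, ← Finset.sum_mul, hw1, one_mul]
    have heach := (Finset.sum_eq_sum_iff_of_le hle).mp hsum2
    have hmem : ∀ i ∈ t.filter (fun i => w i ≠ 0), z i ∈ {x ∈ S | ℓ x = c} := by
      intro i hi
      rw [Finset.mem_filter] at hi
      refine ⟨hz i hi.1, ?_⟩
      have := heach i hi.1
      have hw0 : 0 < w i := lt_of_le_of_ne (hw i hi.1) (Ne.symm hi.2)
      exact mul_left_cancel₀ hi.2 this
    have hpos : 0 < ∑ i ∈ t.filter (fun i => w i ≠ 0), w i := by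
      rw [Finset.sum_filter_ne_zero, hw1]; norm_num
    have := Finset.centerMass_mem_convexHull (t.filter (fun i => w i ≠ 0))
      (fun i hi => hw i (Finset.mem_filter.mp hi).1) hpos hmem
    rwa [Finset.centerMass_filter_ne_zero, hx] at this
  · apply Set.subset_inter
    · exact convexHull_mono (Set.sep_subset _ _)
    · have : convexHull ℝ {x ∈ S | ℓ x = c} ⊆ {x | ℓ x = c} := by
        apply convexHull_min
        · exact fun x hx => hx.2
        · exact convex_hyperplane ℓ.isLinear c
      exact this

lemma extreme_mono {P A B : Set E} (h : IsExtreme ℝ P A) (hAB : A ⊆ B) (hBP : B ⊆ P) :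
    IsExtreme ℝ B A :=
  ⟨hAB, fun _ hx₁ _ hx₂ _ hx hseg => h.2 (hBP hx₁) (hBP hx₂) hx hseg⟩

lemma face_split {P F Q₁ Q₂ : Set E} (hQ₁ : Convex ℝ Q₁) (hQ₂ : Convex ℝ Q₂)
    (h1 : Q₁.Nonempty) (h2 : Q₂.Nonempty) (hu : convexHull ℝ (Q₁ ∪ Q₂) = P)
    (hF : IsExtreme ℝ P F) : F ⊆ convexHull ℝ ((F ∩ Q₁) ∪ (F ∩ Q₂)) := by
  intro x hxF
  have hxP : x ∈ P := hF.1 hxF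
  have hQ₁P : Q₁ ⊆ P := hu ▸ (Set.subset_union_left.trans (subset_convexHull ℝ _))
  have hQ₂P : Q₂ ⊆ P := hu ▸ (Set.subset_union_right.trans (subset_convexHull ℝ _))
  have : x ∈ convexJoin ℝ Q₁ Q₂ := by
    rw [← Convex.convexHull_union hQ₁ hQ₂ h1 h2, hu]; exact hxP
  rw [mem_convexJoin] at this
  obtain ⟨a, ha, b, hb, t, s, ht, hs, hts, hx⟩ := this
  rcases eq_or_lt_of_le ht with ht0 | ht0
  · have : x = b := by rw [← hx, ← ht0]; simp [show s = 1 by linarith]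
    subst this
    exact subset_convexHull ℝ _ (Or.inr ⟨hxF, hb⟩)
  · rcases eq_or_lt_of_le hs with hs0 | hs0
    · have : x = a := by rw [← hx, ← hs0]; simp [show t = 1 by linarith]
      subst this
      exact subset_convexHull ℝ _ (Or.inl ⟨hxF, ha⟩)
    · have hseg : x ∈ openSegment ℝ a b := ⟨t, s, ht0, hs0, hts, hx⟩
      have haF := hF.2 (hQ₁P ha) (hQ₂P hb) hxF hseg
      have hbF := hF.2 (hQ₂P hb) (hQ₁P ha) hxF (by rwa [openSegment_symm] at hseg)
      have hc : Convex ℝ (convexHull ℝ ((F ∩ Q₁) ∪ (F ∩ Q₂))) := convex_convexHull ℝ _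
      have haM : a ∈ convexHull ℝ ((F ∩ Q₁) ∪ (F ∩ Q₂)) :=
        subset_convexHull ℝ _ (Or.inl ⟨haF, ha⟩)
      have hbM : b ∈ convexHull ℝ ((F ∩ Q₁) ∪ (F ∩ Q₂)) :=
        subset_convexHull ℝ _ (Or.inr ⟨hbF, hb⟩)
      rw [← hx]
      exact hc haM hbM (le_of_lt ht0) (le_of_lt hs0) hts

lemma subsingleton_dim_zero {n : ℕ} {S : Set (Fin n → ℝ)} (h : S.Subsingleton) :
    Module.finrank ℝ (affineSpan ℝ S).direction = 0 := by
  have hd : (affineSpan ℝ S).direction = ⊥ := by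
    rw [direction_affineSpan, vectorSpan_def]
    rw [eq_bot_iff, Submodule.span_le]
    rintro v ⟨a, ha, b, hb, rfl⟩
    simp [h ha hb, Submodule.zero_mem]
  rw [hd]
  exact finrank_bot ℝ _

end Aux

def projLast (m k : ℕ) : (Fin (m + k) → ℝ) →ₗ[ℝ] (Fin k → ℝ) :=
  LinearMap.funLeft ℝ ℝ (fun j => Fin.natAdd m j)

lemma projLast_apply (m k : ℕ) (x : Fin (m + k) → ℝ) (j : Fin k) :
    projLast m k x j = x (Fin.natAdd m j) := rfl

lemma natAdd_inj (m k : ℕ) : Function.Injective (fun j : Fin k => (Fin.natAdd m j : Fin (m + k))) := by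
  intro a b hab
  have : m + (a : ℕ) = m + (b : ℕ) := congrArg Fin.val hab
  exact Fin.ext (by omega)

lemma projLast_surjective (m k : ℕ) : Function.Surjective (projLast m k) := by
  intro y
  refine ⟨Fin.append 0 y, funext fun j => ?_⟩
  rw [projLast_apply]
  exact Fin.append_right _ _ j

lemma finrank_ker_projLast (m k : ℕ) :
    Module.finrank ℝ (LinearMap.ker (projLast m k)) = m := by
  have h := LinearMap.finrank_range_add_finrank_ker (projLast m k)
  rw [LinearMap.range_eq_top.mpr (projLast_surjective m k), finrank_top] at h
  rw [Module.finrank_pi, Module.finrank_pi] at h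
  simp only [Fintype.card_fin] at h
  omega

def sumLast (m k : ℕ) : (Fin (m + k) → ℝ) →ₗ[ℝ] ℝ :=
  ∑ j : Fin k, LinearMap.proj (R := ℝ) (φ := fun _ : Fin k => ℝ) j ∘ₗ projLast m k

lemma sumLast_apply (m k : ℕ) (x : Fin (m + k) → ℝ) :
    sumLast m k x = ∑ j, projLast m k x j := by
  simp [sumLast]


/-- let `P = P₀ ∗ P₁ ∗ ⋯ ∗ P_k ⊂ ℝⁿ` be a `B_k`-polytope (`n = m + k`, the
`P_i ⊂ ℝ^{n−k}` lattice polytopes with `dim (P₁ + ⋯ + P_k) < k` and `dim P₀ = n − k`).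
If `dim P_i ≥ 1` for all `i` and `P₀` is not a join, then `P` is not a join. -/
theorem bk_polytope_not_join {m k : ℕ}
    (P₀ : Set (Fin (m + k) → ℝ)) (Q : Fin k → Set (Fin (m + k) → ℝ))
    (hsub₀ : ∀ x ∈ P₀, ∀ i : Fin (m + k), m ≤ (i : ℕ) → x i = 0)
    (hsub : ∀ j : Fin k, ∀ x ∈ Q j, ∀ i : Fin (m + k), m ≤ (i : ℕ) → x i = 0)
    (h₀ : IsLatticePolytope P₀) (h₀ne : P₀.Nonempty)
    (hQ : ∀ j, IsLatticePolytope (Q j) ∧ (Q j).Nonempty)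
    (hdim₀ : polyDim P₀ = m)
    (hmink : polyDim {x | ∃ f : Fin k → (Fin (m + k) → ℝ),
        (∀ j, f j ∈ Q j) ∧ x = ∑ j, f j} < k)
    (hd₀ : 1 ≤ polyDim P₀) (hdQ : ∀ j, 1 ≤ polyDim (Q j))
    (hnotjoin : ¬ IsJoinPolytope P₀)
    (P : Set (Fin (m + k) → ℝ))
    (hPdef : P = convexHull ℝ
      (P₀ ∪ ⋃ j : Fin k, (fun v => v + Pi.single (Fin.natAdd m j) (1 : ℝ)) '' Q j)) :
    ¬ IsJoinPolytope P := by
  classical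
  intro hJ
  -- Basic convexity
  have hP₀conv : Convex ℝ P₀ := by
    obtain ⟨V, -, hV⟩ := h₀; rw [hV]; exact convex_convexHull ℝ _
  have hQconv : ∀ j, Convex ℝ (Q j) := fun j => by
    obtain ⟨V, -, hV⟩ := (hQ j).1; rw [hV]; exact convex_convexHull ℝ _
  -- layers
  set L : Fin k → Set (Fin (m + k) → ℝ) :=
    fun j => (fun v => v + Pi.single (Fin.natAdd m j) (1 : ℝ)) '' Q j with hLdef
  have hLconv : ∀ j, Convex ℝ (L j) := by
    intro j
    have := (hQconv j).translate (Pi.single (Fin.natAdd m j) (1 : ℝ))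
    convert this using 2
    ext v
    simp [add_comm]
    exact add_comm _ _
  have hLne : ∀ j, (L j).Nonempty := fun j => ((hQ j).2).image _
  -- projection onto last k coordinates
  have hπ : ∀ (x : Fin (m + k) → ℝ) (j : Fin k), projLast m k x j = x (Fin.natAdd m j) :=
    projLast_apply m k
  have hmle : ∀ j : Fin k, m ≤ ((Fin.natAdd m j : Fin (m + k)) : ℕ) := fun j =>
    Nat.le_add_right m j
  have hnatinj : Function.Injective (fun j : Fin k => (Fin.natAdd m j : Fin (m + k))) :=
    natAdd_inj m k
  have hπP₀ : ∀ x ∈ P₀, projLast m k x = 0 := by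
    intro x hx
    funext j
    exact hsub₀ x hx _ (hmle j)
  have hπL : ∀ j, ∀ x ∈ L j, projLast m k x = Pi.single j 1 := by
    rintro j x ⟨v, hv, rfl⟩
    funext j'
    rw [hπ]
    have hv0 : v (Fin.natAdd m j') = 0 := hsub j v hv _ (hmle j')
    by_cases hjj : j' = j
    · subst hjj; simp [hv0]
    · have : (Fin.natAdd m j' : Fin (m + k)) ≠ Fin.natAdd m j := fun h => hjj (hnatinj h)
      simp [hv0, Pi.single_apply, this, hjj]
  -- the sum functional
  have hℓ₀ : ∀ x, sumLast m k x = ∑ j, projLast m k x j := sumLast_apply m k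
  have hℓ₀P₀ : ∀ x ∈ P₀, sumLast m k x = 0 := by
    intro x hx; rw [hℓ₀]; simp [hπP₀ x hx]
  have hℓ₀L : ∀ j, ∀ x ∈ L j, sumLast m k x = 1 := by
    intro j x hx; rw [hℓ₀]
    have := hπL j x hx
    rw [this]
    simp
  -- generators
  set S : Set (Fin (m + k) → ℝ) := P₀ ∪ ⋃ j, L j with hSdef
  have hPS : P = convexHull ℝ S := hPdef
  have hSmem : ∀ x ∈ S, x ∈ P₀ ∨ ∃ j, x ∈ L j := by
    intro x hx
    rcases hx with hx | hx
    · exact Or.inl hx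
    · rcases Set.mem_iUnion.mp hx with ⟨j, hj⟩; exact Or.inr ⟨j, hj⟩
  -- P₀ is an extreme face of P
  have hbound₀ : ∀ x ∈ S, (-(sumLast m k)) x ≤ 0 := by
    intro x hx
    rcases hSmem x hx with h | ⟨j, h⟩
    · simp [hℓ₀P₀ x h]
    · simp [hℓ₀L j x h]
  have hboundP₀ : ∀ x ∈ P, (-(sumLast m k)) x ≤ 0 := by
    intro x hx
    rw [hPS] at hx
    have h2 : convexHull ℝ S ⊆ {w | (-(sumLast m k)) w ≤ (0 : ℝ)} :=
      convexHull_min hbound₀ (convex_halfSpace_le (LinearMap.isLinear (-(sumLast m k))) 0)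
    exact h2 hx
  have hzero₀ : {x ∈ S | (-(sumLast m k)) x = 0} = P₀ := by
    ext x
    constructor
    · rintro ⟨hxS, hx0⟩
      rcases hSmem x hxS with h | ⟨j, h⟩
      · exact h
      · exfalso
        have h1 := hℓ₀L j x h
        simp only [LinearMap.neg_apply, neg_eq_zero] at hx0
        rw [h1] at hx0
        norm_num at hx0
    · intro hx
      exact ⟨Or.inl hx, by simp [hℓ₀P₀ x hx]⟩
  have hsliceP₀ : {x ∈ P | (-(sumLast m k)) x = 0} = P₀ := by
    rw [hPS, hull_slice S _ 0 hbound₀, hzero₀, hP₀conv.convexHull_eq]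
  have hP₀ext : IsExtreme ℝ P P₀ := by
    have := extreme_slice P (-(sumLast m k)) 0 hboundP₀
    rwa [hsliceP₀] at this
  have hP₀P : P₀ ⊆ P := hP₀ext.1
  -- each layer is an extreme face of P
  have hLext : ∀ j, IsExtreme ℝ P (L j) := by
    intro j
    set πj : (Fin (m + k) → ℝ) →ₗ[ℝ] ℝ :=
      LinearMap.proj (R := ℝ) (φ := fun _ : Fin k => ℝ) j ∘ₗ projLast m k with hπjdef
    have hπjval : ∀ x, πj x = projLast m k x j := fun x => rfl
    have hboundS : ∀ x ∈ S, πj x ≤ 1 := by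
      intro x hx
      rcases hSmem x hx with h | ⟨j', h⟩
      · rw [hπjval, hπP₀ x h]; norm_num
      · rw [hπjval, hπL j' x h]
        by_cases hjj : j = j'
        · subst hjj; simp
        · simp [Pi.single_apply, hjj]
    have hboundP : ∀ x ∈ P, πj x ≤ 1 := by
      intro x hx
      rw [hPS] at hx
      have h2 : convexHull ℝ S ⊆ {w | πj w ≤ (1 : ℝ)} :=
        convexHull_min hboundS (convex_halfSpace_le (LinearMap.isLinear πj) 1)
      exact h2 hx
    have hzero : {x ∈ S | πj x = 1} = L j := by
      ext x
      constructor
      · rintro ⟨hxS, hx1⟩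
        rcases hSmem x hxS with h | ⟨j', h⟩
        · exfalso; rw [hπjval, hπP₀ x h] at hx1; norm_num at hx1
        · by_cases hjj : j = j'
          · subst hjj; exact h
          · exfalso
            rw [hπjval, hπL j' x h] at hx1
            simp [Pi.single_apply, hjj] at hx1
      · intro hx
        refine ⟨Or.inr (Set.mem_iUnion.mpr ⟨j, hx⟩), ?_⟩
        rw [hπjval, hπL j x hx]
        simp
    have hslice : {x ∈ P | πj x = 1} = L j := by
      rw [hPS, hull_slice S _ 1 hboundS, hzero, (hLconv j).convexHull_eq]
    have := extreme_slice P πj 1 hboundP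
    rwa [hslice] at this
  have hLP : ∀ j, L j ⊆ P := fun j => (hLext j).1
  -- span of P₀ differences is the kernel of the projection
  have hdim₀' : Module.finrank ℝ (Submodule.span ℝ (P₀ - P₀)) = m := by
    have h1 := hdim₀
    unfold polyDim at h1
    rw [direction_affineSpan, vectorSpan_def] at h1
    exact h1
  have hU : Submodule.span ℝ (P₀ - P₀) = LinearMap.ker (projLast m k) := by
    apply Submodule.eq_of_le_of_finrank_le
    · rw [Submodule.span_le]
      rintro v ⟨a, ha, b, hb, rfl⟩
      rw [SetLike.mem_coe, LinearMap.mem_ker, map_sub, hπP₀ a ha, hπP₀ b hb, sub_zero]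
    · rw [finrank_ker_projLast, hdim₀']
  -- each Q j (hence each L j) has two distinct points
  have hL2pts : ∀ j, ∃ a ∈ L j, ∃ b ∈ L j, a ≠ b := by
    intro j
    have hQ2 : ∃ a ∈ Q j, ∃ b ∈ Q j, a ≠ b := by
      by_contra h
      push_neg at h
      have hs : (Q j).Subsingleton := fun a ha b hb => h a ha b hb
      have h0 := subsingleton_dim_zero hs
      have h1 := hdQ j
      unfold polyDim at h1
      rw [h0] at h1
      exact absurd h1 (by norm_num)
    obtain ⟨a, ha, b, hb, hab⟩ := hQ2
    refine ⟨_, ⟨a, ha, rfl⟩, _, ⟨b, hb, rfl⟩, fun h => hab ?_⟩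
    exact add_left_injective _ h
  -- the key contradiction
  have key : ∀ Q₁ Q₂ : Set (Fin (m + k) → ℝ),
      IsExtreme ℝ P Q₁ → IsExtreme ℝ P Q₂ → Convex ℝ Q₁ → Convex ℝ Q₂ →
      Q₁.Nonempty → Q₂.Nonempty →
      Submodule.span ℝ (Q₁ - Q₁) ⊓ Submodule.span ℝ (Q₂ - Q₂) = ⊥ →
      Q₁ ∩ Q₂ = ∅ → convexHull ℝ (Q₁ ∪ Q₂) = P → P₀ ⊆ Q₁ → False := by
    intro Q₁ Q₂ hext₁ hext₂ hconv₁ hconv₂ hne₁ hne₂ hspan hdisj hunion hP₀Q₁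
    have hQ₁P : Q₁ ⊆ P := hext₁.1
    have hQ₂P : Q₂ ⊆ P := hext₂.1
    have hUD₁ : LinearMap.ker (projLast m k) ≤ Submodule.span ℝ (Q₁ - Q₁) := by
      rw [← hU]
      exact Submodule.span_mono (Set.sub_subset_sub hP₀Q₁ hP₀Q₁)
    have hQ₂inj : ∀ a ∈ Q₂, ∀ b ∈ Q₂, projLast m k a = projLast m k b → a = b := by
      intro a ha b hb hab
      have h1 : a - b ∈ Submodule.span ℝ (Q₂ - Q₂) :=
        Submodule.subset_span ⟨a, ha, b, hb, rfl⟩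
      have h2 : a - b ∈ Submodule.span ℝ (Q₁ - Q₁) := by
        apply hUD₁
        rw [LinearMap.mem_ker, map_sub, hab, sub_self]
      have h3 : a - b ∈ (⊥ : Submodule ℝ _) := hspan ▸ Submodule.mem_inf.mpr ⟨h2, h1⟩
      rw [Submodule.mem_bot, sub_eq_zero] at h3
      exact h3
    have hmeet : ∀ j, ∃ p, p ∈ L j ∩ Q₁ := by
      intro j
      by_contra hno
      push_neg at hno
      have hLQ₁ : L j ∩ Q₁ = ∅ := Set.eq_empty_iff_forall_notMem.mpr hno
      obtain ⟨a, ha, b, hb, hab⟩ := hL2pts j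
      have hsplit := face_split hconv₁ hconv₂ hne₁ hne₂ hunion (hLext j)
      rw [hLQ₁, Set.empty_union] at hsplit
      have hss : (L j ∩ Q₂).Subsingleton := by
        rintro x ⟨hxL, hxQ⟩ y ⟨hyL, hyQ⟩
        apply hQ₂inj x hxQ y hyQ
        rw [hπL j x hxL, hπL j y hyL]
      rcases Set.eq_empty_or_nonempty (L j ∩ Q₂) with hemp | ⟨c, hc⟩
      · rw [hemp, convexHull_empty] at hsplit
        exact hsplit ha
      · have hsub1 : L j ∩ Q₂ ⊆ {c} := fun x hx => hss hx hc
        have hLc : L j ⊆ {c} := hsplit.trans (convexHull_min hsub1 (convex_singleton c))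
        exact hab ((hLc ha).trans (hLc hb).symm)
    choose p hp using hmeet
    obtain ⟨p₀, hp₀⟩ := h₀ne
    have hD₁top : Submodule.span ℝ (Q₁ - Q₁) = ⊤ := by
      rw [eq_top_iff]
      intro v _
      have hw : ∀ j, p j - p₀ ∈ Submodule.span ℝ (Q₁ - Q₁) := fun j =>
        Submodule.subset_span ⟨p j, (hp j).2, p₀, hP₀Q₁ hp₀, rfl⟩
      have hπy : projLast m k (v - ∑ j, (projLast m k v j) • (p j - p₀)) = 0 := by
        rw [map_sub, map_sum]
        have hπw : ∀ j, projLast m k ((projLast m k v j) • (p j - p₀))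
            = Pi.single j (projLast m k v j) := by
          intro j
          rw [map_smul, map_sub, hπL j (p j) (hp j).1, hπP₀ p₀ hp₀, sub_zero,
            ← Pi.single_smul, smul_eq_mul, mul_one]
        rw [Finset.sum_congr rfl (fun j _ => hπw j), Finset.univ_sum_single, sub_self]
      have hyU : v - ∑ j, (projLast m k v j) • (p j - p₀) ∈ Submodule.span ℝ (Q₁ - Q₁) :=
        hUD₁ (LinearMap.mem_ker.mpr hπy)
      have hvy : v = (v - ∑ j, (projLast m k v j) • (p j - p₀))
          + ∑ j, (projLast m k v j) • (p j - p₀) := by abel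
      rw [hvy]
      exact Submodule.add_mem _ hyU
        (Submodule.sum_mem _ (fun j _ => Submodule.smul_mem _ _ (hw j)))
    have haff : affineSpan ℝ Q₁ = ⊤ := by
      obtain ⟨q, hq⟩ := hne₁
      rw [eq_top_iff]
      intro x _
      have hdir : (affineSpan ℝ Q₁).direction = ⊤ := by
        rw [direction_affineSpan, vectorSpan_def]
        exact hD₁top
      have hmem : (x - q) +ᵥ q ∈ affineSpan ℝ Q₁ :=
        AffineSubspace.vadd_mem_of_mem_direction (hdir ▸ Submodule.mem_top)
          (mem_affineSpan ℝ hq)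
      simpa using hmem
    obtain ⟨x₀, hx₀⟩ : (interior Q₁).Nonempty :=
      (hconv₁.interior_nonempty_iff_affineSpan_eq_top).mpr haff
    obtain ⟨q, hq₂⟩ := hne₂
    have hqP : q ∈ P := hQ₂P hq₂
    have hqQ₁ : q ∈ Q₁ := by
      by_cases hqx : q = x₀
      · rw [hqx]; exact interior_subset hx₀
      · obtain ⟨δ, hδ, hball⟩ := Metric.isOpen_iff.mp isOpen_interior x₀ hx₀
        have hnorm : (0:ℝ) < ‖x₀ - q‖ := by
          rw [norm_pos_iff]
          exact sub_ne_zero.mpr (Ne.symm hqx)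
        set ε := δ / (2 * ‖x₀ - q‖) with hε
        have hεpos : 0 < ε := by positivity
        have hzQ₁ : x₀ + ε • (x₀ - q) ∈ Q₁ := by
          apply interior_subset
          apply hball
          rw [Metric.mem_ball, dist_eq_norm]
          have h1 : x₀ + ε • (x₀ - q) - x₀ = ε • (x₀ - q) := by abel
          rw [h1, norm_smul, Real.norm_eq_abs, abs_of_pos hεpos]
          have h2 : ε * ‖x₀ - q‖ = δ / 2 := by
            rw [hε]; field_simp
          rw [h2]
          linarith
        have h1ε : (0:ℝ) < 1 + ε := by positivity
        have hseg : x₀ ∈ openSegment ℝ q (x₀ + ε • (x₀ - q)) := by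
          refine ⟨ε / (1 + ε), 1 / (1 + ε), by positivity, by positivity, ?_, ?_⟩
          · field_simp
            ring
          · match_scalars <;> field_simp <;> ring
        have := hext₁.2 hqP (hQ₁P hzQ₁) (interior_subset hx₀) hseg
        exact this
    exact Set.eq_empty_iff_forall_notMem.mp hdisj q ⟨hqQ₁, hq₂⟩
  -- conclude
  obtain ⟨Q₁, Q₂, ⟨hext₁, hconv₁⟩, ⟨hext₂, hconv₂⟩, hne₁, hne₂, hspan, hdisj, hunion⟩ := hJ
  have hsplit₀ := face_split hconv₁ hconv₂ hne₁ hne₂ hunion hP₀ext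
  by_cases h1 : (P₀ ∩ Q₁).Nonempty
  · by_cases h2 : (P₀ ∩ Q₂).Nonempty
    · apply hnotjoin
      refine ⟨P₀ ∩ Q₁, P₀ ∩ Q₂,
        ⟨extreme_mono (hP₀ext.inter hext₁) Set.inter_subset_left hP₀P,
          hP₀conv.inter hconv₁⟩,
        ⟨extreme_mono (hP₀ext.inter hext₂) Set.inter_subset_left hP₀P,
          hP₀conv.inter hconv₂⟩,
        h1, h2, ?_, ?_, ?_⟩
      · have hle : Submodule.span ℝ ((P₀ ∩ Q₁) - (P₀ ∩ Q₁)) ⊓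
            Submodule.span ℝ ((P₀ ∩ Q₂) - (P₀ ∩ Q₂)) ≤
            Submodule.span ℝ (Q₁ - Q₁) ⊓ Submodule.span ℝ (Q₂ - Q₂) :=
          inf_le_inf
            (Submodule.span_mono (Set.sub_subset_sub Set.inter_subset_right Set.inter_subset_right))
            (Submodule.span_mono (Set.sub_subset_sub Set.inter_subset_right Set.inter_subset_right))
        rw [hspan] at hle
        exact le_bot_iff.mp hle
      · have : (P₀ ∩ Q₁) ∩ (P₀ ∩ Q₂) ⊆ Q₁ ∩ Q₂ := fun x hx => ⟨hx.1.2, hx.2.2⟩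
        rw [hdisj] at this
        exact Set.eq_empty_iff_forall_notMem.mpr (fun x hx => this hx)
      · apply Set.Subset.antisymm
        · exact convexHull_min
            (Set.union_subset Set.inter_subset_left Set.inter_subset_left) hP₀conv
        · exact hsplit₀
    · rw [Set.not_nonempty_iff_eq_empty] at h2
      have hP₀Q₁ : P₀ ⊆ Q₁ := by
        intro x hx
        have hx2 := hsplit₀ hx
        rw [h2, Set.union_empty] at hx2
        exact (convexHull_min Set.inter_subset_right hconv₁) hx2
      exact key Q₁ Q₂ hext₁ hext₂ hconv₁ hconv₂ hne₁ hne₂ hspan hdisj hunion hP₀Q₁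
  · rw [Set.not_nonempty_iff_eq_empty] at h1
    have hP₀Q₂ : P₀ ⊆ Q₂ := by
      intro x hx
      have hx2 := hsplit₀ hx
      rw [h1, Set.empty_union] at hx2
      exact (convexHull_min Set.inter_subset_right hconv₂) hx2
    apply key Q₂ Q₁ hext₂ hext₁ hconv₂ hconv₁ hne₂ hne₁ ?_ ?_ ?_ hP₀Q₂
    · rw [inf_comm] at hspan; exact hspan
    · rw [Set.inter_comm] at hdisj; exact hdisj
    · rw [Set.union_comm] at hunion; exact hunion


end
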